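/- arXiv:1112.0594 — 6 statements merged into one kernel-verified Lean document; each statement's English description precedes it below -/
import Mathlib

section
/- Let g, h ∈ ℝ with g > 0, h ≥ 0, f ∈ ℝ with 0 ≤ f, f² ≤ 4, h ≥ 2 - g and 2g ≥ f. If f² - 4gh ≥ 0, then both roots λ_± = (f ± √(f² - 4gh))/(2g) of the quadratic gλ² - fλ + h = 0 satisfy |λ_±| ≤ 1. -/
theorem real_eigenvalue_case (f g h : ℝ) (hg : g > 0) (hh : h ≥ 0)
    (hf0 : 0 ≤ f) (hf4 : f ^ 2 ≤ 4) (hhg : h ≥ 2 - g) (hgf : 2 * g ≥ f)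
    (hdisc : f ^ 2 - 4 * g * h ≥ 0) :
    |(f + Real.sqrt (f ^ 2 - 4 * g * h)) / (2 * g)| ≤ 1 ∧
    |(f - Real.sqrt (f ^ 2 - 4 * g * h)) / (2 * g)| ≤ 1 := by
  set s := Real.sqrt (f ^ 2 - 4 * g * h) with hs
  have hs0 : 0 ≤ s := Real.sqrt_nonneg _
  have hs2 : s ^ 2 = f ^ 2 - 4 * g * h := Real.sq_sqrt hdisc
  have hf2 : f ≤ 2 := by nlinarith
  have hsf : s ≤ f := by nlinarith
  have hsg : s ≤ 2 * g - f := by nlinarith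
  have h2g : (0:ℝ) < 2 * g := by linarith
  constructor <;>
    rw [abs_div, abs_of_pos h2g, div_le_one h2g] <;>
    rw [abs_le] <;> constructor <;> linarith
end

section
/- Under the hypotheses of the previous context with Δt ≤ 1/c, every eigenvalue λ of the amplification matrix A(ξ) = [[f(ξ)/g(ξ), -h(ξ)/g(ξ)], [1, 0]] satisfies |λ| ≤ 1; that is, ρ(A(ξ)) ≤ 1 for all ξ ∈ [0, π]. -/
lemma spectral_aux (F G H : ℝ) (hGpos : 0 < G) (hF0 : 0 ≤ F) (hF2 : F ≤ 2*G)
    (h1 : G - F + H ≥ 0) (h2 : G + F + H ≥ 0) (h3 : H ≤ G) (lam : ℂ)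
    (hlam : lam ∈ spectrum ℂ (Matrix.of
      ![![((F : ℂ) / (G : ℂ)), (-((H : ℂ) / (G : ℂ)))], ![(1 : ℂ), (0 : ℂ)]])) :
    ‖lam‖ ≤ 1 := by
  have hdet : (algebraMap ℂ (Matrix (Fin 2) (Fin 2) ℂ) lam - Matrix.of
      ![![((F:ℂ) / G), (-((H:ℂ) / G))], ![(1 : ℂ), (0 : ℂ)]]).det = 0 := by
    rw [spectrum.mem_iff] at hlam
    by_contra hd
    exact hlam ((Matrix.isUnit_iff_isUnit_det _).2 (isUnit_iff_ne_zero.2 hd))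
  have hG' : (G : ℂ) ≠ 0 := by exact_mod_cast hGpos.ne'
  have E : (G:ℂ) * lam^2 - F * lam + H = 0 := by
    rw [Matrix.det_fin_two] at hdet
    simp [Matrix.algebraMap_matrix_apply] at hdet
    field_simp at hdet
    linear_combination hdet
  obtain ⟨a, ha⟩ : ∃ a, lam.re = a := ⟨_, rfl⟩
  obtain ⟨b, hb⟩ : ∃ b, lam.im = b := ⟨_, rfl⟩
  rw [Complex.ext_iff] at E
  obtain ⟨E1, E2⟩ := E
  simp only [pow_two, Complex.mul_re, Complex.mul_im, Complex.sub_re, Complex.sub_im,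
    Complex.add_re, Complex.add_im, Complex.ofReal_re, Complex.ofReal_im, Complex.zero_re,
    Complex.zero_im, ha, hb] at E1 E2
  have e1 : G*(a^2-b^2) - F*a + H = 0 := by linear_combination E1
  have e2 : 2*G*a*b - F*b = 0 := by linear_combination E2
  have key : a^2 + b^2 ≤ 1 := by
    rcases eq_or_ne b 0 with hb0 | hb0
    · subst hb0
      have ha1 : a ≤ 1 := by
        by_contra hax
        push_neg at hax
        have p1 : 0 < G*(a+1) - F := by nlinarith
        have q := mul_pos (by linarith : (0:ℝ) < a - 1) p1
        nlinarith
      have ha2 : -1 ≤ a := by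
        by_contra hax
        push_neg at hax
        have p1 : 0 < G*(-(a-1)) - F := by nlinarith
        have q := mul_pos (by linarith : (0:ℝ) < -(a + 1)) p1
        nlinarith
      nlinarith
    · have h2a : 2*G*a = F :=
        mul_left_cancel₀ hb0 (show b * (2*G*a) = b * F by linear_combination e2)
      have keyq : G*(a^2+b^2) = H := by linear_combination -e1 + a * h2a
      nlinarith
  have habs : (‖lam‖)^2 = a^2 + b^2 := by
    rw [Complex.sq_norm, Complex.normSq_apply, ha, hb]; ring
  nlinarith [norm_nonneg lam, habs]

theorem spectral_radius_le_one (c m β γ dt : ℝ)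
    (hc : c > 0) (hm : m ≥ 0) (hβ : β ≥ 0) (hγ : γ ≥ 0) (hdt : dt > 0)
    (hcfl : dt ≤ 1 / c)
    (f g h : ℝ → ℝ)
    (hf : ∀ ξ, f ξ = 2 - 2 * c ^ 2 * dt ^ 2 * Real.sin (ξ / 2) ^ 2)
    (hg : ∀ ξ, g ξ = 1 + (c ^ 2 * dt ^ 2 + 2 * β * dt) * Real.sin (ξ / 2) ^ 2
        + (m ^ 2 * dt ^ 2 + γ * dt) / 2)
    (hh : ∀ ξ, h ξ = 1 + (c ^ 2 * dt ^ 2 - 2 * β * dt) * Real.sin (ξ / 2) ^ 2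
        + (m ^ 2 * dt ^ 2 - γ * dt) / 2) :
    ∀ ξ ∈ Set.Icc (0 : ℝ) Real.pi,
      ∀ lam ∈ spectrum ℂ (Matrix.of
        ![![(f ξ / g ξ : ℂ), (-(h ξ / g ξ) : ℂ)], ![(1 : ℂ), (0 : ℂ)]]),
        ‖lam‖ ≤ 1 := by
  intro ξ hξ lam hlam
  have hfx := hf ξ
  have hgx := hg ξ
  have hhx := hh ξ
  set S := Real.sin (ξ / 2) ^ 2 with hS
  have hs0 : 0 ≤ S := sq_nonneg _
  have hs1 : S ≤ 1 := Real.sin_sq_le_one _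
  have hdc : dt * c ≤ 1 := (le_div_iff₀ hc).1 hcfl
  have hcd2 : c ^ 2 * dt ^ 2 ≤ 1 := by nlinarith [mul_nonneg hdt.le hc.le]
  have nn1 : 0 ≤ c ^ 2 * dt ^ 2 * S := by positivity
  have nn2 : 0 ≤ β * dt * S := by positivity
  have nn3 : 0 ≤ m ^ 2 * dt ^ 2 := by positivity
  have nn4 : 0 ≤ γ * dt := by positivity
  have nn5 : 0 ≤ (1 - c ^ 2 * dt ^ 2) * S := by nlinarith
  have hGpos : 0 < g ξ := by rw [hgx]; linarith
  have hF0 : 0 ≤ f ξ := by rw [hfx]; linarith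
  have hF2 : f ξ ≤ 2 * g ξ := by rw [hfx, hgx]; linarith
  have h1 : g ξ - f ξ + h ξ ≥ 0 := by rw [hfx, hgx, hhx]; linarith
  have h2 : g ξ + f ξ + h ξ ≥ 0 := by rw [hfx, hgx, hhx]; linarith
  have h3 : h ξ ≤ g ξ := by rw [hgx, hhx]; linarith
  exact spectral_aux (f ξ) (g ξ) (h ξ) hGpos hF0 hF2 h1 h2 h3 lam hlam
end

section
/- Let c, m, β, γ ≥ 0 and Δt > 0 with 2/γ < Δt (γ > 0). For ξ ∈ [0, π] define g(ξ) = 1 + (c²Δt² + 2βΔt) sin²(ξ/2) + (m²Δt² + γΔt)/2 and h(ξ) = 1 + (c²Δt² - 2βΔt) sin²(ξ/2) + (m²Δt² - γΔt)/2. Then g(ξ) - h(ξ) ≥ 2 for all ξ ∈ [0, π], and consequently |f(ξ)/g(ξ)| + |h(ξ)/g(ξ)| ≤ 1 whenever |f(ξ)| ≤ 2; in particular the infinity norm of the amplification matrix A(ξ) is at most 1. -/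
theorem infinity_norm_stability (c m β γ dt : ℝ)
    (hc : c ≥ 0) (hm : m ≥ 0) (hβ : β ≥ 0) (hγ : γ > 0) (hdt : dt > 0)
    (hcond : 2 / γ < dt)
    (g h : ℝ → ℝ)
    (hg : ∀ ξ, g ξ = 1 + (c ^ 2 * dt ^ 2 + 2 * β * dt) * Real.sin (ξ / 2) ^ 2
        + (m ^ 2 * dt ^ 2 + γ * dt) / 2)
    (hh : ∀ ξ, h ξ = 1 + (c ^ 2 * dt ^ 2 - 2 * β * dt) * Real.sin (ξ / 2) ^ 2
        + (m ^ 2 * dt ^ 2 - γ * dt) / 2) :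
    ∀ ξ ∈ Set.Icc (0 : ℝ) Real.pi,
      g ξ - h ξ ≥ 2 ∧
      ∀ fval : ℝ, |fval| ≤ 2 → |fval / g ξ| + |h ξ / g ξ| ≤ 1 := by
  intro ξ hξ
  have hs : (0:ℝ) ≤ Real.sin (ξ / 2) ^ 2 := sq_nonneg _
  have hγdt : 2 < γ * dt := by
    have := (div_lt_iff₀ hγ).mp hcond
    linarith [this]
  have hsub : g ξ - h ξ ≥ 2 := by
    rw [hg, hh]
    nlinarith [mul_nonneg (mul_nonneg hβ hdt.le) hs]
  refine ⟨hsub, ?_⟩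
  intro fval hf
  have hgpos : 0 < g ξ := by
    rw [hg]
    nlinarith [mul_nonneg (mul_nonneg (sq_nonneg c) (sq_nonneg dt)) hs,
      mul_nonneg (mul_nonneg hβ hdt.le) hs, sq_nonneg (m*dt)]
  have hsum : g ξ + h ξ ≥ 2 := by
    rw [hg, hh]
    nlinarith [mul_nonneg (mul_nonneg (sq_nonneg c) (sq_nonneg dt)) hs, sq_nonneg (m*dt)]
  have habsh : |h ξ| ≤ g ξ - 2 := by
    rw [abs_le]; constructor <;> linarith
  rw [abs_div, abs_div, abs_of_pos hgpos, ← add_div, div_le_one hgpos]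
  linarith
end

section
/- Let c, m, β, γ ≥ 0 and Δt > 0, and set f(ξ) = 2 (constant), g(ξ) = 1 + (c²Δt² + 2βΔt) sin²(ξ/2) + (m²Δt² + γΔt)/2, h(ξ) = 1 + (c²Δt² - 2βΔt) sin²(ξ/2) + (m²Δt² - γΔt)/2. If 2/γ ≤ Δt ≤ 1/c then for every ξ ∈ [0, π] the roots of g(ξ)λ² - 2λ + h(ξ) = 0 have modulus at most 1. -/
private lemma quad_real_root_sq_le_one (a b x : ℝ) (ha1 : 1 ≤ a) (hab : 2 ≤ a + b)
    (heq : a * x ^ 2 - 2 * x + b = 0) : x ^ 2 ≤ 1 := by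
  have hx1 : x ≤ 1 := by
    by_contra hx
    push_neg at hx
    nlinarith [mul_pos (sub_pos.mpr hx) (show (0:ℝ) < a * (x + 1) - 2 by nlinarith)]
  have hx2 : -1 ≤ x := by
    by_contra hx
    push_neg at hx
    nlinarith [mul_pos (show (0:ℝ) < 1 - x by linarith) (show (0:ℝ) < 2 - a * (x + 1) by nlinarith)]
  nlinarith

private lemma quad_complex_root_sq_le_one (a b x y : ℝ) (ha1 : 1 ≤ a) (hba : b ≤ a)
    (hax : a * x = 1) (h1 : a * (x ^ 2 - y ^ 2) - 2 * x + b = 0) : x ^ 2 + y ^ 2 ≤ 1 := by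
  have hay : a * y ^ 2 = b - x := by nlinarith
  nlinarith [sq_nonneg y]

theorem first_scheme_roots_modulus_le_one (c m β γ dt : ℝ)
    (hc : c ≥ 0) (hm : m ≥ 0) (hβ : β ≥ 0) (hγ : γ ≥ 0) (hdt : dt > 0)
    (g h : ℝ → ℝ)
    (hg : ∀ ξ, g ξ = 1 + (c ^ 2 * dt ^ 2 + 2 * β * dt) * Real.sin (ξ / 2) ^ 2
        + (m ^ 2 * dt ^ 2 + γ * dt) / 2)
    (hh : ∀ ξ, h ξ = 1 + (c ^ 2 * dt ^ 2 - 2 * β * dt) * Real.sin (ξ / 2) ^ 2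
        + (m ^ 2 * dt ^ 2 - γ * dt) / 2)
    (hlo : 2 / γ ≤ dt) (hhi : dt ≤ 1 / c) :
    ∀ ξ ∈ Set.Icc (0 : ℝ) Real.pi,
      ∀ lam : ℂ, (g ξ : ℂ) * lam ^ 2 - 2 * lam + (h ξ : ℂ) = 0 →
        ‖lam‖ ≤ 1 := by
  intro ξ hξ lam heq
  set a : ℝ := g ξ with ha'
  set b : ℝ := h ξ with hb'
  set x : ℝ := lam.re
  set y : ℝ := lam.im
  have hs : (0:ℝ) ≤ Real.sin (ξ / 2) ^ 2 := sq_nonneg _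
  have hcd : (0:ℝ) ≤ c ^ 2 * dt ^ 2 := by positivity
  have hmd : (0:ℝ) ≤ m ^ 2 * dt ^ 2 := by positivity
  have hbd : (0:ℝ) ≤ β * dt := mul_nonneg hβ hdt.le
  have hgd : (0:ℝ) ≤ γ * dt := mul_nonneg hγ hdt.le
  have ha1 : (1:ℝ) ≤ a := by
    rw [ha', hg]
    nlinarith [mul_nonneg hcd hs, mul_nonneg hbd hs]
  have hab2 : (2:ℝ) ≤ a + b := by
    rw [ha', hb', hg, hh]
    nlinarith [mul_nonneg hcd hs]
  have hba : b ≤ a := by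
    rw [ha', hb', hg, hh]
    nlinarith [mul_nonneg hbd hs]
  clear hg hh hlo hhi hξ hs hcd hmd hbd hgd hc hm hβ hγ
  -- real and imaginary parts of the quadratic equation
  have h1 : a * (x ^ 2 - y ^ 2) - 2 * x + b = 0 := by
    have := congrArg Complex.re heq
    simp [Complex.ext_iff, pow_two, Complex.mul_re, Complex.mul_im] at this
    linarith [this]
  have h2 : 2 * (a * x * y) - 2 * y = 0 := by
    have := congrArg Complex.im heq
    simp [Complex.ext_iff, pow_two, Complex.mul_re, Complex.mul_im] at this
    linarith [this]
  have key : x ^ 2 + y ^ 2 ≤ 1 := by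
    have h2' : y * (a * x - 1) = 0 := by linarith [h2, mul_comm y (a * x)]; 
    rcases mul_eq_zero.mp (show y * (a * x - 1) = 0 by nlinarith [h2]) with hy | hax
    · have h1' : a * x ^ 2 - 2 * x + b = 0 := by
        rw [hy] at h1; nlinarith [h1]
      have := quad_real_root_sq_le_one a b x ha1 hab2 h1'
      rw [hy]
      nlinarith
    · exact quad_complex_root_sq_le_one a b x y ha1 hba (by linarith) h1
  have habs := Complex.sq_norm lam
  rw [Complex.normSq_apply] at habs
  nlinarith [norm_nonneg lam]
end

section
/- Let (uₙ)ₙ₌₁^N be C² real functions on [0,∞) satisfying üₙ - (c² + β d/dt)Δ²ₓuₙ + γu̇ₙ + m²uₙ + sin uₙ = J for 1 ≤ n ≤ N, with u_{N+1} = u_N for all t, where Δ²ₓuₙ = u_{n+1} - 2uₙ + u_{n-1}. Define Hₙ = ½[u̇ₙ² + c²(u_{n+1} - uₙ)² + m²uₙ²] + (1 - cos uₙ) - Juₙ and E = ∑_{n=1}^N Hₙ + (c²/2)(u₁ - u₀)². Then dE/dt = c²(u₀ - u₁)u̇₀ - β[∑_{n=1}^N (u̇ₙ - u̇_{n-1})²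 + (u̇₁ - u̇₀)u̇₀] - γ∑_{n=1}^N u̇ₙ². -/
lemma sg_tele1 (a b : ℕ → ℝ) : ∀ N : ℕ,
    ∑ n ∈ Finset.Icc 1 N,
      (b n * (a (n+1) - 2*a n + a (n-1)) + (b (n+1) - b n) * (a (n+1) - a n))
    = b (N+1) * (a (N+1) - a N) - b 1 * (a 1 - a 0) := by
  intro N
  induction N with
  | zero => simp
  | succ N ih =>
    rw [Finset.sum_Icc_succ_top (by omega : 1 ≤ N+1), ih]
    simp only [Nat.add_sub_cancel]
    ring

lemma sg_tele2 (b : ℕ → ℝ) : ∀ N : ℕ,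
    ∑ n ∈ Finset.Icc 1 N,
      (b n * (b (n+1) - 2*b n + b (n-1)) + (b n - b (n-1))^2)
    = (b (N+1) * (b (N+1) - b N) - (b (N+1) - b N)^2)
      - (b 1 * (b 1 - b 0) - (b 1 - b 0)^2) := by
  intro N
  induction N with
  | zero => simp
  | succ N ih =>
    rw [Finset.sum_Icc_succ_top (by omega : 1 ≤ N+1), ih]
    simp only [Nat.add_sub_cancel]
    ring

lemma sg_keysum (N : ℕ) (c β γ : ℝ) (a b : ℕ → ℝ) (ha : a (N+1) = a N)
    (hb : b (N+1) = b N) :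
    ∑ n ∈ Finset.Icc 1 N,
      (c^2 * (b n * (a (n+1) - 2*a n + a (n-1)) + (b (n+1) - b n) * (a (n+1) - a n))
        + β * (b n * (b (n+1) - 2*b n + b (n-1))) - γ * b n ^ 2)
      + c^2 * (b 1 - b 0) * (a 1 - a 0)
    = c^2 * (a 0 - a 1) * b 0
      - β * ((∑ n ∈ Finset.Icc 1 N, (b n - b (n-1))^2) + (b 1 - b 0) * b 0)
      - γ * ∑ n ∈ Finset.Icc 1 N, b n ^ 2 := by
  have h1 := sg_tele1 a b N
  have h2 := sg_tele2 b N
  have hsplit : ∑ n ∈ Finset.Icc 1 N,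
      (c^2 * (b n * (a (n+1) - 2*a n + a (n-1)) + (b (n+1) - b n) * (a (n+1) - a n))
        + β * (b n * (b (n+1) - 2*b n + b (n-1))) - γ * b n ^ 2)
    = c^2 * (∑ n ∈ Finset.Icc 1 N,
        (b n * (a (n+1) - 2*a n + a (n-1)) + (b (n+1) - b n) * (a (n+1) - a n)))
      + β * ((∑ n ∈ Finset.Icc 1 N,
        (b n * (b (n+1) - 2*b n + b (n-1)) + (b n - b (n-1))^2))
        - ∑ n ∈ Finset.Icc 1 N, (b n - b (n-1))^2)
      - γ * ∑ n ∈ Finset.Icc 1 N, b n ^ 2 := by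
    rw [← Finset.sum_sub_distrib, Finset.mul_sum, Finset.mul_sum, Finset.mul_sum,
      ← Finset.sum_add_distrib, ← Finset.sum_sub_distrib]
    apply Finset.sum_congr rfl
    intro n _
    ring
  rw [hsplit, h1, h2, ha, hb]
  ring

/-- Rate of change of the total energy for the damped, driven sine-Gordon
chain with mass and Josephson current. -/
theorem damped_energy_rate (N : ℕ) (c β γ J msq : ℝ)
    (u u' u'' : ℕ → ℝ → ℝ) (E : ℝ → ℝ)
    (hu : ∀ n t, HasDerivAt (u n) (u' n t) t)
    (hu' : ∀ n t, HasDerivAt (u' n) (u'' n t) t)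
    (heq : ∀ n, 1 ≤ n → n ≤ N → ∀ t : ℝ,
      u'' n t
        - (c ^ 2 * (u (n + 1) t - 2 * u n t + u (n - 1) t)
            + β * (u' (n + 1) t - 2 * u' n t + u' (n - 1) t))
        + γ * u' n t + msq * u n t + Real.sin (u n t) = J)
    (hbd : ∀ t : ℝ, u (N + 1) t = u N t)
    (hE : ∀ t : ℝ, E t = ∑ n ∈ Finset.Icc 1 N,
        ((1 / 2) * ((u' n t) ^ 2 + c ^ 2 * (u (n + 1) t - u n t) ^ 2
            + msq * (u n t) ^ 2)
          + (1 - Real.cos (u n t)) - J * u n t)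
      + (c ^ 2 / 2) * (u 1 t - u 0 t) ^ 2) :
    ∀ t : ℝ, HasDerivAt E
      (c ^ 2 * (u 0 t - u 1 t) * u' 0 t
        - β * ((∑ n ∈ Finset.Icc 1 N, (u' n t - u' (n - 1) t) ^ 2)
            + (u' 1 t - u' 0 t) * u' 0 t)
        - γ * ∑ n ∈ Finset.Icc 1 N, (u' n t) ^ 2) t := by
  intro t
  have hEfun : E = fun t => ∑ n ∈ Finset.Icc 1 N,
        ((1 / 2) * ((u' n t) ^ 2 + c ^ 2 * (u (n + 1) t - u n t) ^ 2
            + msq * (u n t) ^ 2)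
          + (1 - Real.cos (u n t)) - J * u n t)
      + (c ^ 2 / 2) * (u 1 t - u 0 t) ^ 2 := funext hE
  -- derivative of each summand
  have hT : ∀ n : ℕ, HasDerivAt (fun t => (1 / 2) * ((u' n t) ^ 2
        + c ^ 2 * (u (n + 1) t - u n t) ^ 2 + msq * (u n t) ^ 2)
        + (1 - Real.cos (u n t)) - J * u n t)
      (u' n t * u'' n t + c ^ 2 * (u (n+1) t - u n t) * (u' (n+1) t - u' n t)
        + msq * u n t * u' n t + Real.sin (u n t) * u' n t - J * u' n t) t := by
    intro n
    have h := (((((hu' n t).fun_pow 2).fun_add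
        (((hu (n+1) t).fun_sub (hu n t)).fun_pow 2 |>.const_mul (c^2))).fun_add
        (((hu n t).fun_pow 2).const_mul msq)).const_mul (1/2 : ℝ)).fun_add
        ((hasDerivAt_const t (1:ℝ)).fun_sub ((hu n t).cos)) |>.fun_sub ((hu n t).const_mul J)
    convert! h using 1
    ring
  have hlast : HasDerivAt (fun t => (c ^ 2 / 2) * (u 1 t - u 0 t) ^ 2)
      (c ^ 2 * (u' 1 t - u' 0 t) * (u 1 t - u 0 t)) t := by
    have h := (((hu 1 t).fun_sub (hu 0 t)).fun_pow 2).const_mul (c^2/2 : ℝ)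
    convert! h using 1
    ring
  have H : HasDerivAt E
      ((∑ n ∈ Finset.Icc 1 N,
        (u' n t * u'' n t + c ^ 2 * (u (n+1) t - u n t) * (u' (n+1) t - u' n t)
          + msq * u n t * u' n t + Real.sin (u n t) * u' n t - J * u' n t))
        + c ^ 2 * (u' 1 t - u' 0 t) * (u 1 t - u 0 t)) t := by
    rw [hEfun]
    exact (HasDerivAt.fun_sum (fun n _ => hT n)).add hlast
  -- boundary condition for the derivative sequence
  have hb' : u' (N+1) t = u' N t := by
    have h1 : HasDerivAt (u N) (u' (N+1) t) t :=
      (show u (N+1) = u N from funext hbd) ▸ hu (N+1) t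
    exact h1.unique (hu N t)
  -- rewrite the derivative using the equations of motion
  have hsum : (∑ n ∈ Finset.Icc 1 N,
        (u' n t * u'' n t + c ^ 2 * (u (n+1) t - u n t) * (u' (n+1) t - u' n t)
          + msq * u n t * u' n t + Real.sin (u n t) * u' n t - J * u' n t))
      = ∑ n ∈ Finset.Icc 1 N,
        (c^2 * (u' n t * (u (n+1) t - 2*u n t + u (n-1) t)
            + (u' (n+1) t - u' n t) * (u (n+1) t - u n t))
          + β * (u' n t * (u' (n+1) t - 2*u' n t + u' (n-1) t))
          - γ * u' n t ^ 2) := by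
    refine Finset.sum_congr rfl (fun n hn => ?_)
    obtain ⟨h1, h2⟩ := Finset.mem_Icc.mp hn
    have h := heq n h1 h2 t
    linear_combination (u' n t) * h
  have hfin := sg_keysum N c β γ (fun n => u n t) (fun n => u' n t) (hbd t) hb'
  have hD : (∑ n ∈ Finset.Icc 1 N,
        (u' n t * u'' n t + c ^ 2 * (u (n+1) t - u n t) * (u' (n+1) t - u' n t)
          + msq * u n t * u' n t + Real.sin (u n t) * u' n t - J * u' n t))
        + c ^ 2 * (u' 1 t - u' 0 t) * (u 1 t - u 0 t)
      = c ^ 2 * (u 0 t - u 1 t) * u' 0 t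
        - β * ((∑ n ∈ Finset.Icc 1 N, (u' n t - u' (n - 1) t) ^ 2)
            + (u' 1 t - u' 0 t) * u' 0 t)
        - γ * ∑ n ∈ Finset.Icc 1 N, (u' n t) ^ 2 := by
    rw [hsum]
    exact hfin
  exact hD ▸ H
end

section
/- Let Cₖ = (c²/4) ∑_{n=1}^N [((u_{n+1}^{k+1} + u_{n+1}ᵏ)/2 - (uₙ^{k+1} + uₙᵏ)/2)² + ((u_{n-1}^{k+1} + u_{n-1}ᵏ)/2 - (uₙ^{k+1} + uₙᵏ)/2)²] for an array (uₙᵏ) satisfying u_{N+1}ᵏ = u_Nᵏ for all k. Then Cₖ - C_{k-1} = (c²/4){((δ²u₀ᵏ - δ²u₁ᵏ)/4)(δₜu₀ᵏ + δₜu₁ᵏ) - ∑_{n=1}^N ((δ²δ²ₓuₙᵏ)/2)(δₜuₙᵏ)}, where δ²uₙᵏ = uₙ^{k+1} + 2uₙᵏ + uₙ^{k-1}. -/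
private lemma tele_aux (F : ℕ → ℝ) (N : ℕ) :
    ∑ n ∈ Finset.Icc 1 N, (F n - F (n - 1)) = F N - F 0 := by
  induction N with
  | zero => simp
  | succ m ih =>
    rw [Finset.sum_Icc_succ_top (Nat.le_add_left 1 m), ih]
    simp only [Nat.add_sub_cancel]
    ring

private lemma abel_aux (a b : ℕ → ℝ) (N : ℕ)
    (haN : a (N + 1) = a N) (hbN : b (N + 1) = b N) :
    ∑ n ∈ Finset.Icc 1 N,
        ((a (n + 1) - a n) * (b (n + 1) - b n)
          + (a (n - 1) - a n) * (b (n - 1) - b n))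
      = (b 0 - b 1) * (a 0 + a 1)
        - 2 * ∑ n ∈ Finset.Icc 1 N, (b (n + 1) - 2 * b n + b (n - 1)) * a n := by
  set F : ℕ → ℝ := fun n =>
    a (n + 1) * b (n + 1) + a n * b (n + 1) - a (n + 1) * b n - a n * b n with hF
  have key : ∀ n ∈ Finset.Icc 1 N,
      (a (n + 1) - a n) * (b (n + 1) - b n)
        + (a (n - 1) - a n) * (b (n - 1) - b n)
      = (F n - F (n - 1)) - 2 * ((b (n + 1) - 2 * b n + b (n - 1)) * a n) := by
    intro n hn
    obtain ⟨m, rfl⟩ : ∃ m, n = m + 1 := by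
      rcases n with _ | m
      · simp at hn
      · exact ⟨m, rfl⟩
    simp only [Nat.add_sub_cancel, hF]
    ring
  rw [Finset.sum_congr rfl key, Finset.sum_sub_distrib, tele_aux,
    ← Finset.mul_sum]
  have hFN : F N = 0 := by simp [hF, haN, hbN]
  rw [hFN]
  simp only [hF]
  ring

/-- Algebraic identity for the coupling-energy difference `Cₖ - C_{k-1}`
in the second scheme. -/
theorem coupling_energy_difference_scheme2
    (N : ℕ) (c : ℝ) (u : ℕ → ℕ → ℝ) (C : ℕ → ℝ)
    (hbd : ∀ k, u (N + 1) k = u N k)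
    (hC : ∀ k, C k = (c ^ 2 / 4) * ∑ n ∈ Finset.Icc 1 N,
        (((u (n + 1) (k + 1) + u (n + 1) k) / 2 - (u n (k + 1) + u n k) / 2) ^ 2
          + ((u (n - 1) (k + 1) + u (n - 1) k) / 2 - (u n (k + 1) + u n k) / 2) ^ 2)) :
    ∀ k, 1 ≤ k →
      C k - C (k - 1)
        = (c ^ 2 / 4) *
            ((((u 0 (k + 1) + 2 * u 0 k + u 0 (k - 1))
                  - (u 1 (k + 1) + 2 * u 1 k + u 1 (k - 1))) / 4)
                * ((u 0 (k + 1) - u 0 (k - 1)) + (u 1 (k + 1) - u 1 (k - 1)))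
              - ∑ n ∈ Finset.Icc 1 N,
                  ((((u (n + 1) (k + 1) + 2 * u (n + 1) k + u (n + 1) (k - 1))
                      - 2 * (u n (k + 1) + 2 * u n k + u n (k - 1))
                      + (u (n - 1) (k + 1) + 2 * u (n - 1) k + u (n - 1) (k - 1))) / 2)
                    * (u n (k + 1) - u n (k - 1)))) := by
  intro k hk
  obtain ⟨j, rfl⟩ : ∃ j, k = j + 1 := ⟨k - 1, (Nat.succ_pred_eq_of_pos hk).symm⟩
  simp only [Nat.add_sub_cancel]
  -- abbreviations
  set a : ℕ → ℝ := fun n => u n (j + 1 + 1) - u n j with ha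
  set b : ℕ → ℝ := fun n => u n (j + 1 + 1) + 2 * u n (j + 1) + u n j with hb
  have haN : a (N + 1) = a N := by simp [ha, hbd]
  have hbN : b (N + 1) = b N := by simp [hb, hbd]
  have habel := abel_aux a b N haN hbN
  rw [hC (j + 1), hC j, ← mul_sub, ← Finset.sum_sub_distrib]
  have h1 : ∑ n ∈ Finset.Icc 1 N,
      ((((u (n + 1) (j + 1 + 1) + u (n + 1) (j + 1)) / 2
            - (u n (j + 1 + 1) + u n (j + 1)) / 2) ^ 2
          + ((u (n - 1) (j + 1 + 1) + u (n - 1) (j + 1)) / 2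
            - (u n (j + 1 + 1) + u n (j + 1)) / 2) ^ 2)
        - (((u (n + 1) (j + 1) + u (n + 1) j) / 2
            - (u n (j + 1) + u n j) / 2) ^ 2
          + ((u (n - 1) (j + 1) + u (n - 1) j) / 2
            - (u n (j + 1) + u n j) / 2) ^ 2))
      = ∑ n ∈ Finset.Icc 1 N,
          (1 / 4) * ((a (n + 1) - a n) * (b (n + 1) - b n)
            + (a (n - 1) - a n) * (b (n - 1) - b n)) := by
    refine Finset.sum_congr rfl fun n _ => ?_
    simp only [ha, hb]
    ring
  rw [h1, ← Finset.mul_sum, habel]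
  have h2 : ∑ n ∈ Finset.Icc 1 N,
      ((((u (n + 1) (j + 1 + 1) + 2 * u (n + 1) (j + 1) + u (n + 1) j)
          - 2 * (u n (j + 1 + 1) + 2 * u n (j + 1) + u n j)
          + (u (n - 1) (j + 1 + 1) + 2 * u (n - 1) (j + 1) + u (n - 1) j)) / 2)
        * (u n (j + 1 + 1) - u n j))
      = ∑ n ∈ Finset.Icc 1 N,
          (1 / 2) * ((b (n + 1) - 2 * b n + b (n - 1)) * a n) := by
    refine Finset.sum_congr rfl fun n _ => ?_
    simp only [ha, hb]
    ring
  rw [h2, ← Finset.mul_sum]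
  simp only [ha, hb]
  ring
end
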